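/- Let G be a group admitting a nonempty strongly aperiodic SFT X ⊆ A^G defined by a finite set F ⊆ G and L ⊆ A^F. Then the subgroup H = ⟨F⟩ is finitely generated and the SFT Y ⊆ A^H defined by (F, L) on H is nonempty and satisfies: for every g ∈ G with g ≠ 1, there exist t ∈ G and an integer n > 0 with (t g t⁻¹)^n ∈ Free(Y). -/

import Mathlib

variable {G A : Type*}

/-- The left shift action of a group on configurations: `(shift g x) h = x (g⁻¹ * h)`. -/
def shift [Group G] (g : G) (x : G → A) : G → A := fun h => x (g⁻¹ * h)

/-- The subshift of finite type on `G` defined by the shape `F` and the pattern set `L`: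
all configurations `x` such that for every `g`, the restriction of `g • x` to `F` lies in `L`. -/
def SFT [Group G] (F : Set G) (L : Set (F → A)) : Set (G → A) :=
  {x | ∀ g : G, (fun f : F => shift g x f) ∈ L}

/-- The subshift of finite type on the subgroup `H` defined by the shape `F ⊆ H`
and the pattern set `L`. -/
def SFTon [Group G] (H : Subgroup G) (F : Set G) (hF : F ⊆ (H : Set G)) (L : Set (F → A)) :
    Set (↥H → A) :=
  {y | ∀ h : ↥H, (fun f : F => y (h⁻¹ * ⟨(f : G), hF f.2⟩)) ∈ L}

/-- The free part of a subshift: elements acting freely on every configuration. -/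
def freePart [Group G] (X : Set (G → A)) : Set G := {g | ∀ x ∈ X, shift g x ≠ x}

/-- If the SFT `X` defined by `(F, L)` on `G` is nonempty and strongly
aperiodic, then `H = ⟨F⟩` is finitely generated, the SFT `Y` defined by `(F, L)` on `H` is
nonempty, and every nontrivial `g ∈ G` has a conjugate with a positive power in `Free(Y)`. -/
theorem closure_fg_and_cond_of_SA
    {G A : Type*} [Group G] [Finite A] (F : Set G) (hFfin : F.Finite) (L : Set (F → A))
    (hXne : (SFT F L).Nonempty)
    (hSA : ∀ x ∈ SFT F L, ∀ g : G, shift g x = x → g = 1) :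
    (Subgroup.closure F).FG ∧
    (SFTon (Subgroup.closure F) F Subgroup.subset_closure L).Nonempty ∧
    ∀ g : G, g ≠ 1 → ∃ t : G, ∃ n : ℕ, 0 < n ∧
      ∃ k : ↥(Subgroup.closure F), (k : G) = (t * g * t⁻¹) ^ n ∧
        k ∈ freePart (SFTon (Subgroup.closure F) F Subgroup.subset_closure L) := by
  classical
  obtain ⟨x, hx⟩ := hXne
  -- the restriction of `x` to `H` belongs to `Y`
  have hy0 : (fun h : ↥(Subgroup.closure F) => x ↑h) ∈
      SFTon (Subgroup.closure F) F Subgroup.subset_closure L := by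
    intro h
    have h1 := hx (h : G)
    have he : (fun f : F => shift (h : G) x ↑f)
        = fun f : F => x ↑(h⁻¹ * (⟨(f : G), Subgroup.subset_closure f.2⟩ :
            ↥(Subgroup.closure F))) := by
      funext f
      simp [shift]
    rw [he] at h1
    exact h1
  refine ⟨(Subgroup.fg_iff _).mpr ⟨F, rfl, hFfin⟩, ⟨_, hy0⟩, ?_⟩
  intro g hg
  by_contra hcon
  push_neg at hcon
  have hcon' : ∀ (t : G) (n : ℕ), 0 < n → ∀ k : ↥(Subgroup.closure F),
      (k : G) = (t * g * t⁻¹) ^ n →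
      ∃ y ∈ SFTon (Subgroup.closure F) F Subgroup.subset_closure L, shift k y = y := by
    intro t n hn k hk
    have h2 := hcon t n hn k hk
    simp only [freePart, Set.mem_setOf_eq] at h2
    push_neg at h2
    exact h2
  -- the double-coset equivalence relation
  have hequiv : Equivalence (fun u v : G =>
      ∃ (m : ℤ) (h : ↥(Subgroup.closure F)), v = g ^ m * u * ↑h) := by
    constructor
    · intro u; exact ⟨0, 1, by simp⟩
    · rintro u v ⟨m, h, rfl⟩
      refine ⟨-m, h⁻¹, ?_⟩
      push_cast
      group
    · rintro u v w ⟨m, h, rfl⟩ ⟨m', h', rfl⟩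
      refine ⟨m' + m, h * h', ?_⟩
      push_cast
      group
  set s : Setoid G := ⟨_, hequiv⟩ with hs
  -- choose representatives of classes
  obtain ⟨c, hc1, hc2⟩ : ∃ c : G → G,
      (∀ u, ∃ (m : ℤ) (h : ↥(Subgroup.closure F)), u = g ^ m * c u * ↑h) ∧
      ∀ u v : G, (∃ (m : ℤ) (h : ↥(Subgroup.closure F)), v = g ^ m * u * ↑h) →
        c u = c v := by
    refine ⟨fun u => (Quotient.mk s u).out, fun u => Quotient.mk_out u,
      fun u v huv => congrArg Quotient.out (Quotient.sound huv)⟩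
  choose M Hc hMH using hc1
  -- the key combinatorial lemma : on each class one can choose a configuration of `Y`
  -- whose values are well defined on the class
  have key : ∀ d : G, ∃ y ∈ SFTon (Subgroup.closure F) F Subgroup.subset_closure L,
      ∀ (m m' : ℤ) (h h' : ↥(Subgroup.closure F)),
        g ^ m * d * ↑h = g ^ m' * d * ↑h' → y h = y h' := by
    intro d
    by_cases hPd : ∃ n : ℕ, 0 < n ∧ ∃ k : ↥(Subgroup.closure F),
        g ^ (n : ℤ) = d * ↑k * d⁻¹
    · -- the class is "periodic": use the hypothesis `hcon'`
      have hnfind := Nat.find_spec hPd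
      set n : ℕ := Nat.find hPd with hn
      obtain ⟨hn0, k, hk⟩ := hnfind
      have hnz : ((n : ℤ)) ≠ 0 := by exact_mod_cast hn0.ne'
      have hnpos : (0 : ℤ) < (n : ℤ) := by exact_mod_cast hn0
      have hkconj : (k : G) = (d⁻¹ * g * (d⁻¹)⁻¹) ^ n := by
        rw [conj_pow, inv_inv, ← zpow_natCast g n, hk]
        group
      obtain ⟨y, hyY, hyfix⟩ := hcon' d⁻¹ n hn0 k hkconj
      have hy1 : ∀ a : ↥(Subgroup.closure F), y (k⁻¹ * a) = y a :=
        fun a => congrFun hyfix a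
      have hfix : ∀ (q : ℤ) (a : ↥(Subgroup.closure F)), y (k ^ q * a) = y a := by
        intro q
        induction q using Int.induction_on with
        | zero => simp
        | succ i ih =>
          intro a
          have h3 := hy1 (k ^ ((i : ℤ) + 1) * a)
          have h4 : k⁻¹ * (k ^ ((i : ℤ) + 1) * a) = k ^ (i : ℤ) * a := by group
          rw [h4] at h3
          rw [← h3]; exact ih a
        | pred i ih =>
          intro a
          have h3 := hy1 (k ^ (-(i : ℤ)) * a)
          have h4 : k⁻¹ * (k ^ (-(i : ℤ)) * a) = k ^ (-(i : ℤ) - 1) * a := by group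
          rw [h4] at h3
          rw [h3]; exact ih a
      have h5 : ∀ q : ℤ, g ^ ((n : ℤ) * q) = d * (↑k : G) ^ q * d⁻¹ := by
        intro q
        rw [zpow_mul, hk, conj_zpow]
      have hdvd : ∀ (j : ℤ) (z : ↥(Subgroup.closure F)),
          g ^ j = d * ↑z * d⁻¹ → (n : ℤ) ∣ j := by
        intro j z hz
        have hr0 : 0 ≤ j % (n : ℤ) := Int.emod_nonneg j hnz
        have hrlt : j % (n : ℤ) < (n : ℤ) := Int.emod_lt_of_pos j hnpos
        have hjr : (n : ℤ) * (j / (n : ℤ)) + j % (n : ℤ) = j := Int.mul_ediv_add_emod j (n : ℤ)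
        have h6 : g ^ (j % (n : ℤ)) =
            d * ((↑z : G) * (↑k : G) ^ (-(j / (n : ℤ)))) * d⁻¹ := by
          have h7 : j % (n : ℤ) = j - (n : ℤ) * (j / (n : ℤ)) := by omega
          rw [h7, zpow_sub, hz, h5]
          group
        rcases hr0.lt_or_eq with hrpos | hrzero
        · exfalso
          have hlt : (j % (n : ℤ)).toNat < n := by omega
          refine Nat.find_min hPd hlt ⟨by omega, z * k ^ (-(j / (n : ℤ))), ?_⟩
          rw [show (((j % (n : ℤ)).toNat : ℤ)) = j % (n : ℤ) from Int.toNat_of_nonneg hr0]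
          push_cast
          exact h6
        · exact ⟨j / (n : ℤ), by omega⟩
      refine ⟨y, hyY, ?_⟩
      intro m m' h h' heq
      have hj : g ^ (m - m') = d * ((↑h' : G) * (↑h : G)⁻¹) * d⁻¹ := by
        calc g ^ (m - m')
            = g ^ (-m') * (g ^ m * d * ↑h) * ((↑h : G)⁻¹ * d⁻¹) := by group
          _ = g ^ (-m') * (g ^ m' * d * ↑h') * ((↑h : G)⁻¹ * d⁻¹) := by rw [heq]
          _ = d * ((↑h' : G) * (↑h : G)⁻¹) * d⁻¹ := by group
      have hj' : g ^ (m - m') = d * ↑(h' * h⁻¹) * d⁻¹ := by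
        push_cast
        exact hj
      obtain ⟨q, hqeq⟩ := hdvd (m - m') (h' * h⁻¹) hj'
      have h8 : g ^ (m - m') = d * (↑k : G) ^ q * d⁻¹ := by rw [hqeq]; exact h5 q
      have h9 : (↑(h' * h⁻¹) : G) = (↑(k ^ q) : G) := by
        have h10 : d * (↑(h' * h⁻¹) : G) * d⁻¹ = d * (↑(k ^ q) : G) * d⁻¹ := by
          rw [← hj']
          rw [h8]
          push_cast
          ring_nf
        have h11 := mul_right_cancel h10
        exact mul_left_cancel h11
      have h12 : h' * h⁻¹ = k ^ q := Subtype.coe_injective h9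
      have h13 : h' = k ^ q * h := by
        rw [← h12]; group
      rw [h13]
      exact (hfix q h).symm
    · -- the class is free: use the restriction of `x`
      refine ⟨_, hy0, ?_⟩
      intro m m' h h' heq
      have hj : g ^ (m - m') = d * ((↑h' : G) * (↑h : G)⁻¹) * d⁻¹ := by
        calc g ^ (m - m')
            = g ^ (-m') * (g ^ m * d * ↑h) * ((↑h : G)⁻¹ * d⁻¹) := by group
          _ = g ^ (-m') * (g ^ m' * d * ↑h') * ((↑h : G)⁻¹ * d⁻¹) := by rw [heq]
          _ = d * ((↑h' : G) * (↑h : G)⁻¹) * d⁻¹ := by group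
      have hmm : m = m' := by
        by_contra hne
        apply hPd
        rcases lt_or_gt_of_ne (sub_ne_zero.mpr hne) with hneg | hpos
        · refine ⟨(-(m - m')).toNat, by omega, h * h'⁻¹, ?_⟩
          rw [show (((-(m - m')).toNat : ℤ)) = -(m - m') from Int.toNat_of_nonneg (by omega)]
          push_cast
          rw [zpow_neg, hj]
          group
        · refine ⟨(m - m').toNat, by omega, h' * h⁻¹, ?_⟩
          rw [show (((m - m').toNat : ℤ)) = m - m' from Int.toNat_of_nonneg (by omega)]
          push_cast
          exact hj
      subst hmm
      have h14 : (↑h : G) = (↑h' : G) := mul_left_cancel heq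
      rw [Subtype.coe_injective h14]
  choose yc hYc hWDc using key
  -- the glued configuration
  obtain ⟨x', hx'app⟩ : ∃ x' : G → A, ∀ u, x' u = yc (c u) (Hc u) := ⟨_, fun u => rfl⟩
  have xval : ∀ (u : G) (m : ℤ) (h : ↥(Subgroup.closure F)),
      u = g ^ m * c u * ↑h → x' u = yc (c u) h := by
    intro u m h hu
    rw [hx'app u]
    exact hWDc (c u) (M u) m (Hc u) h (by rw [← hMH u, ← hu])
  -- `x'` is `g`-periodic
  have hinv : shift g x' = x' := by
    funext u
    show x' (g⁻¹ * u) = x' u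
    have hcc : c u = c (g⁻¹ * u) := hc2 u (g⁻¹ * u) ⟨-1, 1, by simp⟩
    have hdec : g⁻¹ * u = g ^ (M u - 1) * c (g⁻¹ * u) * ↑(Hc u) := by
      rw [← hcc]
      conv_lhs => rw [hMH u]
      group
    rw [xval (g⁻¹ * u) (M u - 1) (Hc u) hdec, ← hcc, hx'app u]
  -- `x'` belongs to the SFT
  have hmem : x' ∈ SFT F L := by
    intro t
    have he : (fun f : F => shift t x' ↑f) = fun f : F =>
        yc (c t⁻¹) (Hc t⁻¹ * ⟨(f : G), Subgroup.subset_closure f.2⟩) := by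
      funext f
      show x' (t⁻¹ * ↑f) = _
      have hcc : c t⁻¹ = c (t⁻¹ * ↑f) :=
        hc2 t⁻¹ (t⁻¹ * ↑f) ⟨0, ⟨(f : G), Subgroup.subset_closure f.2⟩, by simp⟩
      have hdec : t⁻¹ * ↑f = g ^ (M t⁻¹) * c (t⁻¹ * ↑f) *
          ↑(Hc t⁻¹ * (⟨(f : G), Subgroup.subset_closure f.2⟩ :
            ↥(Subgroup.closure F))) := by
        rw [← hcc]
        conv_lhs => rw [hMH t⁻¹]
        push_cast
        group
      rw [xval _ _ _ hdec, ← hcc]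
    rw [show (fun f : F => shift t x' ↑f) = _ from he]
    have h15 : ∀ hh : ↥(Subgroup.closure F),
        (fun f : F => yc (c t⁻¹) (hh⁻¹ * ⟨(f : G), Subgroup.subset_closure f.2⟩)) ∈ L :=
      hYc (c t⁻¹)
    have h16 := h15 ((Hc t⁻¹)⁻¹)
    simpa using h16
  exact hg (hSA x' hmem g hinv)
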